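/- Let G be the generator matrix of an (n,k) BCH-DFT code with k not dividing n. Then for any k×k submatrix G_k of G, the largest eigenvalue of G_k^H G_k is strictly greater than 1. -/

import Mathlib

open Matrix Finset Complex Real

/-- The unitary `l × l` DFT matrix, with entries `(1/√l)·exp(-2πi·r·s/l)`. -/
noncomputable def dftMatrix (l : ℕ) : Matrix (Fin l) (Fin l) ℂ :=
  fun r s => (1 / Real.sqrt l : ℝ) * Complex.exp (-(2 * Real.pi * Complex.I * r.val * s.val) / l)

/-- The `n × k` selection matrix with an `α × α` identity block at the top-left and a
`β × β` identity block at the bottom-right (`α + β = k`), zeros elsewhere. -/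
def sigmaMat (n k α : ℕ) : Matrix (Fin n) (Fin k) ℂ :=
  fun r s => if (s.val < α ∧ r.val = s.val) ∨ (α ≤ s.val ∧ r.val = s.val + (n - k)) then 1 else 0

/-- The generator matrix `G = √(n/k) · Wₙᴴ Σ W_k` of an `(n,k)` BCH-DFT code. -/
noncomputable def genMatrix (n k α : ℕ) : Matrix (Fin n) (Fin k) ℂ :=
  (Real.sqrt ((n : ℝ) / k) : ℂ) • ((dftMatrix n)ᴴ * sigmaMat n k α * dftMatrix k)

lemma exp_div_eq_one_iff (a : ℤ) (l : ℕ) (hl : 0 < l) :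
    Complex.exp (2 * π * I * a / l) = 1 ↔ (l:ℤ) ∣ a := by
  rw [Complex.exp_eq_one_iff]
  constructor
  · rintro ⟨m, hm⟩
    refine ⟨m, ?_⟩
    have hl' : (l:ℂ) ≠ 0 := by exact_mod_cast Nat.cast_ne_zero.mpr hl.ne'
    field_simp at hm
    have h3 : (a : ℂ) = l * m := by
      have h2 : (2 * (π:ℂ) * I) * a = (2 * (π:ℂ) * I) * (l * m) := by
        linear_combination (2 * (π:ℂ) * I) * hm
      exact mul_left_cancel₀ Complex.two_pi_I_ne_zero h2
    exact_mod_cast h3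
  · rintro ⟨m, rfl⟩
    refine ⟨m, ?_⟩
    have hl' : (l:ℂ) ≠ 0 := by exact_mod_cast Nat.cast_ne_zero.mpr hl.ne'
    push_cast
    field_simp
lemma dft_entry_conj (l : ℕ) (t r : Fin l) :
    star (dftMatrix l t r) =
      ((1 / Real.sqrt l : ℝ) : ℂ) * Complex.exp ((2 * π * I * t.val * r.val) / l) := by
  simp only [dftMatrix, RCLike.star_def, _root_.map_mul, Complex.conj_ofReal,
    ← Complex.exp_conj]
  congr 1
  rw [map_div₀, map_neg]
  simp only [_root_.map_mul, Complex.conj_I, Complex.conj_ofReal, map_natCast, map_ofNat]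
  ring

lemma dft_mul_conjTranspose (l : ℕ) (hl : 0 < l) :
    dftMatrix l * (dftMatrix l)ᴴ = 1 := by
  ext r r'
  rw [Matrix.mul_apply]
  have hl' : (l:ℂ) ≠ 0 := by exact_mod_cast Nat.cast_ne_zero.mpr hl.ne'
  have hlR : Real.sqrt l ≠ 0 := by positivity
  set z : ℂ := Complex.exp (2 * π * I * (((r':ℕ) : ℂ) - ((r:ℕ) : ℂ)) / l) with hz
  have hterm : ∀ s : Fin l, dftMatrix l r s * (dftMatrix l)ᴴ s r'
      = (((1 / Real.sqrt l : ℝ) : ℂ))^2 * z ^ (s:ℕ) := by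
    intro s
    rw [Matrix.conjTranspose_apply, dft_entry_conj]
    simp only [dftMatrix, hz]
    rw [← Complex.exp_nat_mul, mul_mul_mul_comm, ← Complex.exp_add]
    congr 1
    · ring
    · rw [← add_div, ← mul_div_assoc]
      congr 1
      ring
  rw [Finset.sum_congr rfl (fun s _ => hterm s), ← Finset.mul_sum]
  have hsum : ∑ s : Fin l, z ^ (s:ℕ) = ∑ s ∈ Finset.range l, z ^ s := by
    rw [Fin.sum_univ_eq_sum_range]
  by_cases h : r = r'
  · subst h
    have hz1 : z = 1 := by rw [hz]; simp
    rw [hsum, hz1]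
    simp only [one_pow, Finset.sum_const, Finset.card_range, nsmul_eq_mul, mul_one]
    rw [Matrix.one_apply_eq]
    push_cast
    rw [div_pow, one_pow, ← Complex.ofReal_pow, Real.sq_sqrt (Nat.cast_nonneg l)]
    field_simp
    simp [hl']
  · have hne : z ≠ 1 := by
      rw [hz]
      intro hc
      have hc' : Complex.exp (2 * π * I * ((((r':ℕ):ℤ) - ((r:ℕ):ℤ)) : ℤ) / l) = 1 := by
        push_cast
        exact hc
      rw [exp_div_eq_one_iff _ l hl] at hc'
      rcases hc' with ⟨m, hm⟩
      have h1 : ((r':ℕ):ℤ) < l := by exact_mod_cast r'.isLt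
      have h2 : ((r:ℕ):ℤ) < l := by exact_mod_cast r.isLt
      have hl0 : (0:ℤ) < l := by exact_mod_cast hl
      have hm0 : m = 0 := by
        by_contra hm0
        have h6 : 1 ≤ |m| := Int.one_le_abs (by omega)
        have habs : |((r':ℕ):ℤ) - ((r:ℕ):ℤ)| < l := by
          rw [abs_lt]; omega
        rw [hm, abs_mul, abs_of_nonneg hl0.le] at habs
        nlinarith
      rw [hm0, mul_zero, sub_eq_zero] at hm
      have : (r':ℕ) = (r:ℕ) := by exact_mod_cast hm
      exact h (Fin.ext this.symm)
    have hzl : z ^ l = 1 := by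
      rw [hz, ← Complex.exp_nat_mul]
      have heq : (l:ℂ) * (2 * π * I * (((r':ℕ) : ℂ) - ((r:ℕ) : ℂ)) / l)
          = ((((r':ℕ):ℤ) - ((r:ℕ):ℤ) : ℤ) : ℂ) * (2 * π * I) := by
        push_cast
        field_simp
      rw [heq, Complex.exp_int_mul_two_pi_mul_I]
    rw [hsum, geom_sum_eq hne, hzl, sub_self, zero_div, mul_zero,
      Matrix.one_apply_ne h]
lemma sigma_gram {n k α β : ℕ} (hab : α + β = k) (hkn : k < n) :
    sigmaMat n k α * (sigmaMat n k α)ᴴ =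
      Matrix.diagonal (fun t : Fin n => if t.val < α ∨ n - β ≤ t.val then 1 else 0) := by
  ext t t'
  rw [Matrix.mul_apply]
  have hterm : ∀ s : Fin k, sigmaMat n k α t s * (sigmaMat n k α)ᴴ s t'
      = if ((s.val < α ∧ t.val = s.val) ∨ (α ≤ s.val ∧ t.val = s.val + (n - k)))
          ∧ ((s.val < α ∧ t'.val = s.val) ∨ (α ≤ s.val ∧ t'.val = s.val + (n - k)))
        then 1 else 0 := by
    intro s
    rw [Matrix.conjTranspose_apply, sigmaMat, sigmaMat]
    by_cases h1 : (s.val < α ∧ t.val = s.val) ∨ (α ≤ s.val ∧ t.val = s.val + (n - k)) <;>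
      by_cases h2 : (s.val < α ∧ t'.val = s.val) ∨ (α ≤ s.val ∧ t'.val = s.val + (n - k)) <;>
      simp [h1, h2]
  rw [Finset.sum_congr rfl (fun s _ => hterm s)]
  by_cases he : t = t'
  · subst he
    rw [Matrix.diagonal_apply_eq]
    by_cases hT : t.val < α ∨ n - β ≤ t.val
    · rw [if_pos hT]
      rcases hT with hT | hT
      · rw [Finset.sum_eq_single (⟨t.val, lt_of_lt_of_le hT (by omega)⟩ : Fin k)]
        · simp; omega
        · intro s _ hs
          rw [if_neg]
          intro hc
          apply hs
          apply Fin.ext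
          simp only
          omega
        · intro h; exact absurd (Finset.mem_univ _) h
      · have htv : t.val < n := t.isLt
        rw [Finset.sum_eq_single (⟨t.val - (n - k), by omega⟩ : Fin k)]
        · simp; omega
        · intro s _ hs
          rw [if_neg]
          intro hc
          apply hs
          apply Fin.ext
          simp only
          omega
        · intro h; exact absurd (Finset.mem_univ _) h
    · rw [if_neg hT]
      apply Finset.sum_eq_zero
      intro s _
      rw [if_neg]
      intro hc
      have hs := s.isLt
      omega
  · rw [Matrix.diagonal_apply_ne _ he]
    apply Finset.sum_eq_zero
    intro s _
    rw [if_neg]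
    intro hc
    apply he
    apply Fin.ext
    omega

lemma indicator_sum {n k α β : ℕ} (hab : α + β = k) (hkn : k < n) (ζ : ℂ) (hζ : ζ ^ n = 1) :
    (∑ t ∈ Finset.range n, (if t < α ∨ n - β ≤ t then (1:ℂ) else 0) * ζ ^ t) * ζ ^ β
      = ∑ t ∈ Finset.range k, ζ ^ t := by
  have hsplit : ∑ t ∈ Finset.range n, (if t < α ∨ n - β ≤ t then (1:ℂ) else 0) * ζ ^ t
      = ∑ t ∈ Finset.range α, ζ ^ t + ∑ t ∈ Finset.Ico (n - β) n, ζ ^ t := by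
    simp_rw [ite_mul, one_mul, zero_mul]
    rw [← Finset.sum_filter]
    have hset : (Finset.range n).filter (fun t => t < α ∨ n - β ≤ t)
        = Finset.range α ∪ Finset.Ico (n - β) n := by
      ext t
      simp only [Finset.mem_filter, Finset.mem_range, Finset.mem_union, Finset.mem_Ico]
      omega
    rw [hset, Finset.sum_union]
    rw [Finset.disjoint_left]
    intro a ha hb
    simp only [Finset.mem_range] at ha
    simp only [Finset.mem_Ico] at hb
    omega
  rw [hsplit, add_mul, Finset.sum_mul, Finset.sum_mul]
  have h1 : ∑ t ∈ Finset.range α, ζ ^ t * ζ ^ β = ∑ t ∈ Finset.Ico β k, ζ ^ t := by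
    rw [Finset.sum_Ico_eq_sum_range]
    have : k - β = α := by omega
    rw [this]
    apply Finset.sum_congr rfl
    intro t _
    rw [← pow_add, add_comm β t]
  have h2 : ∑ t ∈ Finset.Ico (n - β) n, ζ ^ t * ζ ^ β = ∑ t ∈ Finset.range β, ζ ^ t := by
    rw [Finset.sum_Ico_eq_sum_range]
    have hb : n - (n - β) = β := by omega
    rw [hb]
    apply Finset.sum_congr rfl
    intro t _
    rw [← pow_add]
    have : n - β + t + β = n + t := by omega
    rw [this, pow_add, hζ, one_mul]
  rw [h1, h2, add_comm, ← Finset.sum_range_add_sum_Ico _ (show β ≤ k by omega)]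

lemma gram_apply {n k α β : ℕ} (hab : α + β = k) (hk : 0 < k) (hkn : k < n) (r r' : Fin n) :
    (genMatrix n k α * (genMatrix n k α)ᴴ) r r'
      = ((n:ℂ)/k) * ((1:ℂ)/n) * ∑ t ∈ Finset.range n,
          (if t < α ∨ n - β ≤ t then (1:ℂ) else 0)
            * (Complex.exp (2*π*I*(((r:ℕ):ℂ)-((r':ℕ):ℂ))/n)) ^ t := by
  have hn : 0 < n := lt_trans hk hkn
  have hn' : (n:ℂ) ≠ 0 := by exact_mod_cast Nat.cast_ne_zero.mpr hn.ne'
  have hWk := dft_mul_conjTranspose k hk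
  have hG : genMatrix n k α * (genMatrix n k α)ᴴ
      = (((n:ℝ)/k : ℝ) : ℂ) •
        ((dftMatrix n)ᴴ * Matrix.diagonal (fun t : Fin n => if t.val < α ∨ n - β ≤ t.val then (1:ℂ) else 0) * dftMatrix n) := by
    unfold genMatrix
    rw [Matrix.conjTranspose_smul, Matrix.smul_mul, Matrix.mul_smul, smul_smul]
    have hsc : (Real.sqrt ((n:ℝ)/k) : ℂ) * star (Real.sqrt ((n:ℝ)/k) : ℂ)
        = (((n:ℝ)/k : ℝ) : ℂ) := by
      rw [RCLike.star_def, Complex.conj_ofReal, ← Complex.ofReal_mul,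
        Real.mul_self_sqrt (by positivity : (0:ℝ) ≤ (n:ℝ)/k)]
    rw [hsc]
    congr 1
    rw [Matrix.conjTranspose_mul, Matrix.conjTranspose_mul, Matrix.conjTranspose_conjTranspose]
    rw [← sigma_gram hab hkn]
    simp only [Matrix.mul_assoc]
    congr 1
    rw [← Matrix.mul_assoc (dftMatrix k), hWk, Matrix.one_mul]
  rw [hG, Matrix.smul_apply]
  rw [Matrix.mul_apply]
  have hterm : ∀ t : Fin n,
      ((dftMatrix n)ᴴ * Matrix.diagonal (fun t : Fin n => if t.val < α ∨ n - β ≤ t.val then (1:ℂ) else 0)) r t * dftMatrix n t r'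
      = ((1:ℂ)/n) * ((if (t:ℕ) < α ∨ n - β ≤ (t:ℕ) then (1:ℂ) else 0)
          * (Complex.exp (2*π*I*(((r:ℕ):ℂ)-((r':ℕ):ℂ))/n)) ^ (t:ℕ)) := by
    intro t
    rw [Matrix.mul_diagonal, Matrix.conjTranspose_apply, dft_entry_conj]
    simp only [dftMatrix]
    rw [← Complex.exp_nat_mul]
    have hexp : Complex.exp (2*π*I*(t:ℕ)*(r:ℕ)/n) * Complex.exp (-(2*π*I*(t:ℕ)*((r':ℕ):ℂ))/n)
        = Complex.exp ((t:ℕ) * (2*π*I*(((r:ℕ):ℂ)-((r':ℕ):ℂ))/n)) := by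
      rw [← Complex.exp_add]
      congr 1
      rw [← add_div, ← mul_div_assoc]
      congr 1
      ring
    have hc2 : ((1/Real.sqrt n : ℝ):ℂ) * ((1/Real.sqrt n : ℝ):ℂ) = (1:ℂ)/n := by
      rw [← Complex.ofReal_mul]
      rw [show (1/Real.sqrt n) * (1/Real.sqrt n) = 1/(Real.sqrt n * Real.sqrt n) by ring,
        Real.mul_self_sqrt (Nat.cast_nonneg n)]
      push_cast
      ring
    calc ((1/Real.sqrt n : ℝ):ℂ) * Complex.exp (2*π*I*(t:ℕ)*(r:ℕ)/n)
          * (if (t:ℕ) < α ∨ n - β ≤ (t:ℕ) then (1:ℂ) else 0)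
          * (((1/Real.sqrt n : ℝ):ℂ) * Complex.exp (-(2*π*I*(t:ℕ)*((r':ℕ):ℂ))/n))
        = (((1/Real.sqrt n : ℝ):ℂ) * ((1/Real.sqrt n : ℝ):ℂ))
          * ((if (t:ℕ) < α ∨ n - β ≤ (t:ℕ) then (1:ℂ) else 0)
            * (Complex.exp (2*π*I*(t:ℕ)*(r:ℕ)/n) * Complex.exp (-(2*π*I*(t:ℕ)*((r':ℕ):ℂ))/n))) := by
          ring
      _ = _ := by rw [hc2, hexp]
  rw [Finset.sum_congr rfl (fun t _ => hterm t), ← Finset.mul_sum]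
  rw [smul_eq_mul]
  push_cast
  rw [← Fin.sum_univ_eq_sum_range (fun t => (if t < α ∨ n - β ≤ t then (1:ℂ) else 0)
    * (Complex.exp (2*π*I*(((r:ℕ):ℂ)-((r':ℕ):ℂ))/n)) ^ t) n]
  ring

lemma gram_diag {n k α β : ℕ} (hab : α + β = k) (hk : 0 < k) (hkn : k < n) (r : Fin n) :
    (genMatrix n k α * (genMatrix n k α)ᴴ) r r = 1 := by
  have hn : 0 < n := lt_trans hk hkn
  have hn' : (n:ℂ) ≠ 0 := by exact_mod_cast Nat.cast_ne_zero.mpr hn.ne'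
  have hk' : (k:ℂ) ≠ 0 := by exact_mod_cast Nat.cast_ne_zero.mpr hk.ne'
  rw [gram_apply hab hk hkn r r]
  have h0 : Complex.exp (2*π*I*(((r:ℕ):ℂ)-((r:ℕ):ℂ))/n) = 1 := by
    simp
  rw [h0]
  have hsum := indicator_sum hab hkn (1:ℂ) (one_pow n)
  rw [one_pow, mul_one] at hsum
  simp only [one_pow] at hsum ⊢
  rw [hsum]
  rw [Finset.sum_const, Finset.card_range, nsmul_eq_mul, mul_one]
  field_simp

lemma gram_offdiag {n k α β : ℕ} (hab : α + β = k) (hk : 0 < k) (hkn : k < n)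
    (r r' : Fin n) (hne : r ≠ r')
    (h0 : (genMatrix n k α * (genMatrix n k α)ᴴ) r r' = 0) :
    (n:ℤ) ∣ k * (((r:ℕ):ℤ) - ((r':ℕ):ℤ)) := by
  have hn : 0 < n := lt_trans hk hkn
  have hn' : (n:ℂ) ≠ 0 := by exact_mod_cast Nat.cast_ne_zero.mpr hn.ne'
  have hk' : (k:ℂ) ≠ 0 := by exact_mod_cast Nat.cast_ne_zero.mpr hk.ne'
  rw [gram_apply hab hk hkn r r'] at h0
  set ζ : ℂ := Complex.exp (2*π*I*(((r:ℕ):ℂ)-((r':ℕ):ℂ))/n) with hζ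
  have hζn : ζ ^ n = 1 := by
    rw [hζ, ← Complex.exp_nat_mul]
    have heq : (n:ℂ) * (2 * π * I * (((r:ℕ) : ℂ) - ((r':ℕ) : ℂ)) / n)
        = ((((r:ℕ):ℤ) - ((r':ℕ):ℤ) : ℤ) : ℂ) * (2 * π * I) := by
      push_cast
      field_simp
    rw [heq, Complex.exp_int_mul_two_pi_mul_I]
  have hζ1 : ζ ≠ 1 := by
    rw [hζ]
    intro hc
    have hc' : Complex.exp (2 * π * I * ((((r:ℕ):ℤ) - ((r':ℕ):ℤ)) : ℤ) / n) = 1 := by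
      push_cast; exact hc
    rw [exp_div_eq_one_iff _ n hn] at hc'
    rcases hc' with ⟨m, hm⟩
    have h1 : ((r:ℕ):ℤ) < n := by exact_mod_cast r.isLt
    have h2 : ((r':ℕ):ℤ) < n := by exact_mod_cast r'.isLt
    have hn0 : (0:ℤ) < n := by exact_mod_cast hn
    have hm0 : m = 0 := by
      by_contra hm0
      have h6 : 1 ≤ |m| := Int.one_le_abs (by omega)
      have habs : |((r:ℕ):ℤ) - ((r':ℕ):ℤ)| < n := by
        rw [abs_lt]
        constructor <;> [skip; skip] <;> omega
      rw [hm, abs_mul, abs_of_nonneg hn0.le] at habs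
      nlinarith
    rw [hm0, mul_zero, sub_eq_zero] at hm
    have : (r:ℕ) = (r':ℕ) := by exact_mod_cast hm
    exact hne (Fin.ext this)
  have hS : ∑ t ∈ Finset.range n, (if t < α ∨ n - β ≤ t then (1:ℂ) else 0) * ζ ^ t = 0 := by
    have hcoef : ((n:ℂ)/k) * ((1:ℂ)/n) ≠ 0 := by
      apply mul_ne_zero
      · exact div_ne_zero hn' hk'
      · exact div_ne_zero one_ne_zero hn'
    exact (mul_eq_zero.mp h0).resolve_left hcoef
  have hgeom := indicator_sum hab hkn ζ hζn
  rw [hS, zero_mul] at hgeom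
  rw [geom_sum_eq hζ1] at hgeom
  have hζk : ζ ^ k = 1 := by
    have := (div_eq_zero_iff.mp hgeom.symm).resolve_right (sub_ne_zero.mpr hζ1)
    linear_combination this
  rw [hζ, ← Complex.exp_nat_mul] at hζk
  have heq2 : (k:ℂ) * (2 * π * I * (((r:ℕ) : ℂ) - ((r':ℕ) : ℂ)) / n)
      = 2 * π * I * (((k * (((r:ℕ):ℤ) - ((r':ℕ):ℤ)) : ℤ)) : ℂ) / n := by
    push_cast
    ring
  rw [heq2, exp_div_eq_one_iff _ n hn] at hζk
  exact hζk

/-- For an `(n,k)` BCH-DFT code with `k ∤ n`, the largest eigenvalue of `G_kᴴ G_k` of any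
`k × k` row-submatrix `G_k` of `G` is strictly greater than `1`. -/
theorem submatrix_gram_max_eigenvalue_gt_one {n k α β : ℕ} (hk : 0 < k) (hkn : k < n)
    (hab : α + β = k) (hndvd : ¬ k ∣ n)
    (f : Fin k → Fin n) (hf : Function.Injective f) :
    1 < Finset.univ.sup' (Finset.univ_nonempty_iff.mpr ⟨⟨0, hk⟩⟩)
        (Matrix.isHermitian_conjTranspose_mul_self
          ((genMatrix n k α).submatrix f id)).eigenvalues := by
  by_contra hcon
  push_neg at hcon
  set Gk := (genMatrix n k α).submatrix f id with hGk
  set hA := Matrix.isHermitian_conjTranspose_mul_self Gk with hhA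
  set A := Gkᴴ * Gk with hAdef
  -- all eigenvalues ≤ 1
  have hle : ∀ i : Fin k, hA.eigenvalues i ≤ 1 := fun i =>
    le_trans (Finset.le_sup' hA.eigenvalues (Finset.mem_univ i)) hcon
  -- Gk * Gkᴴ entries are Gram entries
  have hGkG : ∀ i j : Fin k, (Gk * Gkᴴ) i j
      = (genMatrix n k α * (genMatrix n k α)ᴴ) (f i) (f j) := by
    intro i j
    simp [Matrix.mul_apply, Matrix.submatrix_apply, Matrix.conjTranspose_apply, hGk]
  -- trace of A is k
  have htrace : A.trace = (k : ℂ) := by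
    rw [hAdef, Matrix.trace_mul_comm]
    rw [Matrix.trace]
    have : ∀ i : Fin k, (Gk * Gkᴴ).diag i = 1 := by
      intro i
      rw [Matrix.diag_apply, hGkG i i, gram_diag hab hk hkn]
    rw [Finset.sum_congr rfl (fun i _ => this i)]
    simp
  -- trace = sum of eigenvalues
  have htr2 : A.trace = ∑ i : Fin k, (hA.eigenvalues i : ℂ) := by
    conv_lhs => rw [hA.spectral_theorem, Unitary.conjStarAlgAut_apply]
    rw [Matrix.trace_mul_comm, ← Matrix.mul_assoc, Matrix.UnitaryGroup.star_mul_self,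
      Matrix.one_mul, Matrix.trace_diagonal]
    exact Finset.sum_congr rfl (fun i _ => rfl)
  have hsum : ∑ i : Fin k, hA.eigenvalues i = (k : ℝ) := by
    have : ((∑ i : Fin k, hA.eigenvalues i : ℝ) : ℂ) = ((k:ℝ) : ℂ) := by
      push_cast
      rw [← htr2, htrace]
    exact_mod_cast this
  -- all eigenvalues equal 1
  have hall : ∀ i : Fin k, hA.eigenvalues i = 1 := by
    by_contra hne
    push_neg at hne
    rcases hne with ⟨i, hi⟩
    have hlt : hA.eigenvalues i < 1 := lt_of_le_of_ne (hle i) hi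
    have : ∑ j : Fin k, hA.eigenvalues j < ∑ _j : Fin k, (1:ℝ) :=
      Finset.sum_lt_sum (fun j _ => hle j) ⟨i, Finset.mem_univ i, hlt⟩
    rw [hsum] at this
    simp at this
  -- A = 1
  have hA1 : A = 1 := by
    have hdiag : Matrix.diagonal (RCLike.ofReal ∘ hA.eigenvalues) = (1 : Matrix (Fin k) (Fin k) ℂ) := by
      have : (RCLike.ofReal ∘ hA.eigenvalues : Fin k → ℂ) = fun _ => 1 := by
        funext i
        simp [hall i]
      rw [this, Matrix.diagonal_one]
    conv_lhs => rw [hA.spectral_theorem, Unitary.conjStarAlgAut_apply]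
    rw [hdiag, Matrix.mul_one]
    exact Matrix.mem_unitaryGroup_iff.mp hA.eigenvectorUnitary.2
  -- Gk Gkᴴ = 1
  have hGG : Gk * Gkᴴ = 1 := mul_eq_one_comm.mp hA1
  -- divisibility
  have hdvd : ∀ i j : Fin k, (n:ℤ) ∣ k * (((f i : ℕ):ℤ) - ((f j : ℕ):ℤ)) := by
    intro i j
    by_cases hij : i = j
    · subst hij; simp
    · have hfne : f i ≠ f j := fun hc => hij (hf hc)
      have h0 : (genMatrix n k α * (genMatrix n k α)ᴴ) (f i) (f j) = 0 := by
        rw [← hGkG i j, hGG, Matrix.one_apply_ne hij]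
      exact gram_offdiag hab hk hkn (f i) (f j) hfne h0
  -- number theory
  set d := Nat.gcd n k with hd
  have hn : 0 < n := lt_trans hk hkn
  have hd0 : 0 < d := Nat.gcd_pos_of_pos_left k hn
  set m := n / d with hm
  have hmd : d * m = n := Nat.mul_div_cancel' (Nat.gcd_dvd_left n k)
  have hm0 : 0 < m := by
    rcases Nat.eq_zero_or_pos m with h | h
    · rw [h, mul_zero] at hmd; omega
    · exact h
  have hmdvd : ∀ i j : Fin k, (m:ℤ) ∣ ((f i : ℕ):ℤ) - ((f j : ℕ):ℤ) := by
    intro i j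
    have h1 : (n:ℤ) ∣ k * (((f i : ℕ):ℤ) - ((f j : ℕ):ℤ)) := hdvd i j
    have hcop : IsCoprime ((n/d : ℕ):ℤ) ((k/d : ℕ):ℤ) :=
      Nat.isCoprime_iff_coprime.mpr (Nat.coprime_div_gcd_div_gcd hd0)
    have hkd : d * (k / d) = k := Nat.mul_div_cancel' (Nat.gcd_dvd_right n k)
    have h2 : ((m:ℤ) * d) ∣ ((k/d : ℕ):ℤ) * d * (((f i : ℕ):ℤ) - ((f j : ℕ):ℤ)) := by
      have e1 : (m:ℤ) * d = n := by
        exact_mod_cast congrArg (Nat.cast : ℕ → ℤ) (by rw [Nat.mul_comm]; exact hmd)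
      have e2 : ((k/d : ℕ):ℤ) * d = k := by
        exact_mod_cast congrArg (Nat.cast : ℕ → ℤ) (by rw [Nat.mul_comm]; exact hkd)
      rw [e1, e2]
      exact h1
    have h3 : (m:ℤ) ∣ ((k/d : ℕ):ℤ) * (((f i : ℕ):ℤ) - ((f j : ℕ):ℤ)) := by
      have hd' : (d:ℤ) ≠ 0 := by exact_mod_cast hd0.ne'
      rcases h2 with ⟨c, hc⟩
      refine ⟨c, ?_⟩
      exact mul_right_cancel₀ hd' (by linear_combination hc)
    have hcop' : IsCoprime ((m:ℤ)) ((k/d : ℕ):ℤ) := by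
      rw [hm]
      exact hcop
    exact hcop'.dvd_of_dvd_mul_left h3
  -- residues mod m all equal
  have i0 : Fin k := ⟨0, hk⟩
  have hmod : ∀ i : Fin k, (f i : ℕ) % m = (f i0 : ℕ) % m := by
    intro i
    have h1 : (m:ℤ) ∣ ((f i : ℕ):ℤ) - ((f i0 : ℕ):ℤ) := hmdvd i i0
    have h2 : ((f i : ℕ):ℤ) % m = ((f i0 : ℕ):ℤ) % m :=
      Int.ModEq.symm (Int.modEq_iff_dvd.mpr h1)
    exact_mod_cast h2
  -- injective map into Fin d
  have hv : ∀ i : Fin k, (f i : ℕ) / m < d := by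
    intro i
    rw [Nat.div_lt_iff_lt_mul hm0]
    have : d * m = n := hmd
    have := (f i).isLt
    omega
  have hvinj : Function.Injective (fun i : Fin k => (⟨(f i : ℕ) / m, hv i⟩ : Fin d)) := by
    intro i j hij
    have h1 : (f i : ℕ) / m = (f j : ℕ) / m := by
      simpa using congrArg Fin.val hij
    have h2 : (f i : ℕ) % m = (f j : ℕ) % m := by rw [hmod i, hmod j]
    have h3 : (f i : ℕ) = (f j : ℕ) := by
      have e1 := Nat.div_add_mod (f i : ℕ) m
      have e2 := Nat.div_add_mod (f j : ℕ) m
      rw [h1] at e1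
      omega
    exact hf (Fin.ext h3)
  have hkd2 : k ≤ d := by
    have := Fintype.card_le_of_injective _ hvinj
    simpa using this
  have hdk : d ≤ k := Nat.le_of_dvd hk (Nat.gcd_dvd_right n k)
  have : d = k := le_antisymm hdk hkd2
  apply hndvd
  rw [← this]
  exact Nat.gcd_dvd_left n k
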